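/- Off-diagonal ratio bound: for any ω ∈ Ω_{κ₀}, U, δ as above, z ∈ U, y' ∈ U ∪ ∂U with y' ≠ z, and e ∈ 𝒱: |δ G_{U,δ}^ω(z+e,y') - G_{U,δ}^ω(z,y')| ≤ (1/κ₀²) · G_{U,δ}^ω(z,y')/G_{U,δ}^ω(z,z). -/

import Mathlib

/-- The unit steps of ℤ^d, encoded by `Fin d × Bool`: `(i, true) ↔ e_i`,
`(i, false) ↔ -e_i`. -/
def step (d : ℕ) (u : Fin d × Bool) : Fin d → ℤ :=
  Pi.single u.1 (if u.2 then 1 else -1)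

namespace Stmt18Aux

variable {d : ℕ}

lemma add_step_ne (x : Fin d → ℤ) (u : Fin d × Bool) : x + step d u ≠ x := by
  intro h
  have h1 := congrFun h u.1
  simp only [Pi.add_apply, step, Pi.single_eq_same] at h1
  split at h1 <;> omega

variable (ω : (Fin d → ℤ) → Fin d × Bool → ℝ) (U : Set (Fin d → ℤ))
  [DecidablePred (· ∈ U)] (z : Fin d → ℤ)

def qa (x : Fin d → ℤ) : ℕ → (Fin d → ℤ) → ℝ
  | 0 => fun z' => if z' = x then 1 else 0
  | n + 1 => fun z' => if z' = z then 0 else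
      ∑ u, if z' - step d u ∈ U then ω (z' - step d u) u * qa x n (z' - step d u) else 0

def qh : ℕ → (Fin d → ℤ) → ℝ
  | 0 => fun x => if x = z then 1 else 0
  | n + 1 => fun x => if x = z then 0 else
      if x ∈ U then ∑ u, ω x u * qh n (x + step d u) else 0

lemma qa_zero (x z' : Fin d → ℤ) : qa ω U z x 0 z' = if z' = x then 1 else 0 := rfl

lemma qa_succ (x : Fin d → ℤ) (n : ℕ) (z' : Fin d → ℤ) :
    qa ω U z x (n + 1) z' = if z' = z then 0 else
      ∑ u, if z' - step d u ∈ U then ω (z' - step d u) u * qa ω U z x n (z' - step d u) else 0 :=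
  rfl

lemma qh_zero (x : Fin d → ℤ) : qh ω U z 0 x = if x = z then 1 else 0 := rfl

lemma qh_succ (n : ℕ) (x : Fin d → ℤ) : qh ω U z (n + 1) x = if x = z then 0 else
    if x ∈ U then ∑ u, ω x u * qh ω U z n (x + step d u) else 0 := rfl

noncomputable def Dfun (κ₀ : ℝ) : ℕ → ℝ := fun t =>
  Nat.rec 0 (fun _ Dj => (Dj + 1) / κ₀) t

lemma Dfun_zero (κ₀ : ℝ) : Dfun κ₀ 0 = 0 := rfl

lemma Dfun_succ' (κ₀ : ℝ) (t : ℕ) : Dfun κ₀ (t + 1) = (Dfun κ₀ t + 1) / κ₀ := rfl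

lemma Dfun_nonneg {κ₀ : ℝ} (hκ : 0 < κ₀) : ∀ t, 0 ≤ Dfun κ₀ t := by
  intro t
  induction t with
  | zero => exact le_refl 0
  | succ t ih => rw [Dfun_succ']; positivity

lemma Dfun_succ {κ₀ : ℝ} (hκ : 0 < κ₀) (t : ℕ) :
    κ₀ * Dfun κ₀ (t + 1) = Dfun κ₀ t + 1 := by
  rw [Dfun_succ']
  field_simp

section Basic

variable {ω U z}
variable (hω0 : ∀ x u, (0:ℝ) ≤ ω x u) (hω1 : ∀ x, ∑ u, ω x u = 1)
  {q : (Fin d → ℤ) → ℕ → (Fin d → ℤ) → ℝ}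
  (hq0 : ∀ x z', q x 0 z' = if z' = x then 1 else 0)
  (hqs : ∀ x n z', q x (n + 1) z' =
    ∑ u, if z' - step d u ∈ U then ω (z' - step d u) u * q x n (z' - step d u) else 0)

include hω0 hq0 hqs in
lemma q_nonneg : ∀ n x z', 0 ≤ q x n z' := by
  intro n
  induction n with
  | zero => intro x z'; rw [hq0]; split <;> norm_num
  | succ n ih =>
    intro x z'
    rw [hqs]
    refine Finset.sum_nonneg fun u _ => ?_
    split
    · exact mul_nonneg (hω0 _ _) (ih _ _)
    · exact le_refl 0

include hq0 hqs in
lemma q_firstStep : ∀ n x z', q x (n + 1) z' =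
    if x ∈ U then ∑ u, ω x u * q (x + step d u) n z' else 0 := by
  intro n
  induction n with
  | zero =>
    intro x z'
    rw [hqs]
    simp only [hq0]
    by_cases hx : x ∈ U
    · rw [if_pos hx]
      refine Finset.sum_congr rfl fun u _ => ?_
      by_cases h : z' - step d u = x
      · rw [if_pos (h ▸ hx), if_pos h,
          if_pos (show z' = x + step d u by rw [← h]; ring), h]
      · have h2 : ¬ z' = x + step d u := fun hh => h (by rw [hh]; ring)
        rw [if_neg h2, mul_zero]
        by_cases hcc : z' - step d u ∈ U
        · rw [if_pos hcc, if_neg h, mul_zero]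
        · rw [if_neg hcc]
    · rw [if_neg hx]
      refine Finset.sum_eq_zero fun u _ => ?_
      by_cases hcc : z' - step d u ∈ U
      · have hne : ¬ z' - step d u = x := fun hh => hx (hh ▸ hcc)
        rw [if_pos hcc, if_neg hne, mul_zero]
      · rw [if_neg hcc]
  | succ n ih =>
    intro x z'
    rw [hqs]
    by_cases hx : x ∈ U
    · rw [if_pos hx]
      have key : ∀ u : Fin d × Bool,
          (if z' - step d u ∈ U then ω (z' - step d u) u * q x (n+1) (z' - step d u) else 0)
          = ∑ v, ω x v * (if z' - step d u ∈ U then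
              ω (z' - step d u) u * q (x + step d v) n (z' - step d u) else 0) := by
        intro u
        by_cases hc : z' - step d u ∈ U
        · rw [if_pos hc, ih, if_pos hx, Finset.mul_sum]
          refine Finset.sum_congr rfl fun v _ => ?_
          rw [if_pos hc]; ring
        · rw [if_neg hc]
          refine (Finset.sum_eq_zero fun v _ => ?_).symm
          rw [if_neg hc, mul_zero]
      rw [Finset.sum_congr rfl fun u _ => key u, Finset.sum_comm]
      refine Finset.sum_congr rfl fun v _ => ?_
      rw [hqs, Finset.mul_sum]
    · rw [if_neg hx]
      refine Finset.sum_eq_zero fun u _ => ?_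
      rw [ih, if_neg hx]
      split
      · rw [mul_zero]
      · rfl

include hω0 hω1 hq0 hqs in
lemma q_le_one : ∀ n x z', q x n z' ≤ 1 := by
  intro n
  induction n with
  | zero => intro x z'; rw [hq0]; split <;> norm_num
  | succ n ih =>
    intro x z'
    rw [q_firstStep hq0 hqs]
    split
    · calc ∑ u, ω x u * q (x + step d u) n z' ≤ ∑ u, ω x u * 1 :=
            Finset.sum_le_sum fun u _ => mul_le_mul_of_nonneg_left (ih _ _) (hω0 _ _)
        _ = 1 := by simp [hω1 x]
    · norm_num


include hω0 in
lemma qa_nonneg : ∀ n x z', 0 ≤ qa ω U z x n z' := by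
  intro n
  induction n with
  | zero => intro x z'; simp only [qa]; split <;> norm_num
  | succ n ih =>
    intro x z'
    simp only [qa]
    split
    · exact le_refl 0
    · refine Finset.sum_nonneg fun u _ => ?_
      split
      · exact mul_nonneg (hω0 _ _) (ih _ _)
      · exact le_refl 0

include hω0 hq0 hqs in
lemma qa_le_q : ∀ n x z', qa ω U z x n z' ≤ q x n z' := by
  intro n
  induction n with
  | zero => intro x z'; simp only [qa, hq0]; exact le_refl _
  | succ n ih =>
    intro x z'
    simp only [qa]
    rw [hqs]
    split
    · refine Finset.sum_nonneg fun u _ => ?_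
      split
      · exact mul_nonneg (hω0 _ _) (q_nonneg hω0 hq0 hqs _ _ _)
      · exact le_refl 0
    · refine Finset.sum_le_sum fun u _ => ?_
      split
      · exact mul_le_mul_of_nonneg_left (ih _ _) (hω0 _ _)
      · exact le_refl 0

lemma qa_at_z : ∀ n x, qa ω U z x n z = if n = 0 ∧ z = x then 1 else 0 := by
  intro n x
  cases n with
  | zero => simp [qa]
  | succ n => simp [qa]

set_option linter.unusedSectionVars false in
lemma qa_firstStep (hz : z ∈ U) : ∀ n y'', qa ω U z z (n + 1) y'' =
    ∑ u, ω z u * qa ω U z (z + step d u) n y'' := by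
  intro n
  induction n with
  | zero =>
    intro y''
    simp only [qa]
    by_cases hy : y'' = z
    · rw [if_pos hy]
      refine (Finset.sum_eq_zero fun u _ => ?_).symm
      have : ¬ y'' = z + step d u := by rw [hy]; exact (add_step_ne z u).symm
      rw [if_neg this, mul_zero]
    · rw [if_neg hy]
      refine Finset.sum_congr rfl fun u _ => ?_
      by_cases h : y'' - step d u = z
      · rw [if_pos (h ▸ hz), if_pos h,
          if_pos (show y'' = z + step d u by rw [← h]; ring), h]
      · have h2 : ¬ y'' = z + step d u := fun hh => h (by rw [hh]; ring)
        rw [if_neg h2, mul_zero]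
        by_cases hcc : y'' - step d u ∈ U
        · rw [if_pos hcc, if_neg h, mul_zero]
        · rw [if_neg hcc]
  | succ n ih =>
    intro y''
    by_cases hy : y'' = z
    · rw [qa_succ, if_pos hy]
      refine (Finset.sum_eq_zero fun u _ => ?_).symm
      rw [qa_succ, if_pos hy, mul_zero]
    · rw [qa_succ, if_neg hy]
      have key : ∀ u : Fin d × Bool,
          (if y'' - step d u ∈ U then
            ω (y'' - step d u) u * qa ω U z z (n+1) (y'' - step d u) else 0)
          = ∑ v, ω z v * (if y'' - step d u ∈ U then
              ω (y'' - step d u) u * qa ω U z (z + step d v) n (y'' - step d u) else 0) := by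
        intro u
        by_cases hc : y'' - step d u ∈ U
        · rw [if_pos hc, ih, Finset.mul_sum]
          refine Finset.sum_congr rfl fun v _ => ?_
          rw [if_pos hc]; ring
        · rw [if_neg hc]
          refine (Finset.sum_eq_zero fun v _ => ?_).symm
          rw [if_neg hc, mul_zero]
      rw [Finset.sum_congr rfl fun u _ => key u, Finset.sum_comm]
      refine Finset.sum_congr rfl fun v _ => ?_
      rw [qa_succ, if_neg hy, Finset.mul_sum]

include hω0 in
lemma qh_nonneg : ∀ n x, 0 ≤ qh ω U z n x := by
  intro n
  induction n with
  | zero => intro x; simp only [qh]; split <;> norm_num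
  | succ n ih =>
    intro x
    simp only [qh]
    split
    · exact le_refl 0
    · split
      · exact Finset.sum_nonneg fun u _ => mul_nonneg (hω0 _ _) (ih _)
      · exact le_refl 0

include hω0 hω1 in
lemma qh_psum_le_one : ∀ N x, ∑ m ∈ Finset.range N, qh ω U z m x ≤ 1 := by
  intro N
  induction N with
  | zero => intro x; simp
  | succ N ih =>
    intro x
    rw [Finset.sum_range_succ']
    simp only [qh_succ, qh_zero]
    by_cases hx : x = z
    · simp [if_pos hx]
    · simp only [if_neg hx]
      by_cases hxu : x ∈ U
      · simp only [if_pos hxu]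
        calc (∑ m ∈ Finset.range N, ∑ u, ω x u * qh ω U z m (x + step d u)) + 0
            = ∑ u, ω x u * ∑ m ∈ Finset.range N, qh ω U z m (x + step d u) := by
              rw [add_zero, Finset.sum_comm]
              exact Finset.sum_congr rfl fun u _ => (Finset.mul_sum _ _ _).symm
          _ ≤ ∑ u, ω x u * 1 :=
              Finset.sum_le_sum fun u _ => mul_le_mul_of_nonneg_left (ih _) (hω0 _ _)
          _ = 1 := by simp [hω1 x]
      · simp only [if_neg hxu]
        simp


include hq0 hqs in
lemma firstVisit : ∀ n x, q x n z =
    ∑ m ∈ Finset.range (n + 1), qh ω U z m x * q z (n - m) z := by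
  intro n
  induction n with
  | zero =>
    intro x
    rw [Finset.sum_range_one, hq0, qh_zero, hq0, if_pos rfl, mul_one]
    by_cases h : x = z
    · rw [if_pos h.symm, if_pos h]
    · rw [if_neg (fun hh => h hh.symm), if_neg h]
  | succ n ih =>
    intro x
    by_cases hx : x = z
    · subst hx
      rw [Finset.sum_range_succ']
      simp [qh_succ, qh_zero]
    · rw [q_firstStep hq0 hqs, Finset.sum_range_succ']
      have h0 : qh ω U z 0 x = 0 := by rw [qh_zero, if_neg hx]
      simp only [qh_succ, if_neg hx, h0, zero_mul, add_zero, Nat.succ_sub_succ, Nat.sub_zero]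
      by_cases hxu : x ∈ U
      · simp only [if_pos hxu]
        symm
        calc ∑ m ∈ Finset.range (n+1), (∑ u, ω x u * qh ω U z m (x + step d u)) * q z (n - m) z
            = ∑ m ∈ Finset.range (n+1), ∑ u, ω x u *
                (qh ω U z m (x + step d u) * q z (n - m) z) := by
              refine Finset.sum_congr rfl fun m _ => ?_
              rw [Finset.sum_mul]
              exact Finset.sum_congr rfl fun u _ => by ring
          _ = ∑ u, ∑ m ∈ Finset.range (n+1), ω x u *
                (qh ω U z m (x + step d u) * q z (n - m) z) := Finset.sum_comm
          _ = ∑ u, ω x u * q (x + step d u) n z := by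
              refine Finset.sum_congr rfl fun u _ => ?_
              rw [← Finset.mul_sum, ← ih]
      · simp only [if_neg hxu, zero_mul]
        simp


include hω0 hq0 hqs in
lemma lastExit (x : Fin d → ℤ) : ∀ n y'', y'' ≠ z →
    q x n y'' = (if x = z then 0 else qa ω U z x n y'') +
      ∑ m ∈ Finset.range n, q x m z * qa ω U z z (n - m) y'' := by
  intro n
  induction n with
  | zero =>
    intro y'' hy
    simp only [hq0, qa_zero, Finset.range_zero, Finset.sum_empty, add_zero]
    by_cases hx : x = z
    · rw [if_pos hx, if_neg (fun hh => hy (hh.trans hx))]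
    · rw [if_neg hx]
  | succ n ih =>
    intro y'' hy
    rw [hqs, Finset.sum_range_succ]
    have hm : ∀ m ∈ Finset.range n, q x m z * qa ω U z z (n + 1 - m) y''
        = ∑ u, (if y'' - step d u ∈ U then
            ω (y'' - step d u) u * (q x m z * qa ω U z z (n - m) (y'' - step d u)) else 0) := by
      intro m hmm
      have hnm : n + 1 - m = (n - m) + 1 := by
        have := Finset.mem_range.mp hmm; omega
      rw [hnm, qa_succ, if_neg hy, Finset.mul_sum]
      refine Finset.sum_congr rfl fun u _ => ?_
      by_cases hcc : y'' - step d u ∈ U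
      · rw [if_pos hcc, if_pos hcc]; ring
      · rw [if_neg hcc, if_neg hcc, mul_zero]
    rw [Finset.sum_congr rfl hm, Finset.sum_comm]
    have hnn : n + 1 - n = 1 := by omega
    have h1 : q x n z * qa ω U z z (n + 1 - n) y'' = ∑ u, (if y'' - step d u ∈ U then
        (if y'' - step d u = z then ω (y'' - step d u) u * q x n z else 0) else 0) := by
      rw [hnn, qa_succ, if_neg hy, Finset.mul_sum]
      refine Finset.sum_congr rfl fun u _ => ?_
      by_cases hcc : y'' - step d u ∈ U
      · rw [if_pos hcc, if_pos hcc, qa_zero]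
        by_cases hw : y'' - step d u = z
        · rw [if_pos hw, if_pos hw, mul_one]; ring
        · rw [if_neg hw, if_neg hw, mul_zero, mul_zero]
      · rw [if_neg hcc, if_neg hcc, mul_zero]
    rw [h1]
    by_cases hx : x = z
    · rw [if_pos hx, zero_add]
      simp only [if_pos hx, zero_add] at ih
      rw [← Finset.sum_add_distrib]
      refine Finset.sum_congr rfl fun u _ => ?_
      by_cases hcc : y'' - step d u ∈ U
      · simp only [if_pos hcc]
        by_cases hw : y'' - step d u = z
        · rw [if_pos hw, hw]
          have hz0 : ∀ m ∈ Finset.range n,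
              ω z u * (q x m z * qa ω U z z (n - m) z) = 0 := by
            intro m hmm
            have hmn := Finset.mem_range.mp hmm
            rw [qa_at_z, if_neg (fun h => by omega), mul_zero, mul_zero]
          rw [Finset.sum_eq_zero hz0, zero_add]
        · rw [if_neg hw, add_zero, ih _ hw, Finset.mul_sum]
      · simp only [if_neg hcc]
        simp
    · rw [if_neg hx, qa_succ, if_neg hy, ← Finset.sum_add_distrib, ← Finset.sum_add_distrib]
      simp only [if_neg hx] at ih
      refine Finset.sum_congr rfl fun u _ => ?_
      by_cases hcc : y'' - step d u ∈ U
      · simp only [if_pos hcc]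
        by_cases hw : y'' - step d u = z
        · rw [if_pos hw, hw]
          have hqa0 : qa ω U z x n z = 0 := by
            rw [qa_at_z, if_neg (fun h => hx h.2.symm)]
          rw [hqa0, mul_zero, zero_add]
          have hz0 : ∀ m ∈ Finset.range n,
              ω z u * (q x m z * qa ω U z z (n - m) z) = 0 := by
            intro m hmm
            have hmn := Finset.mem_range.mp hmm
            rw [qa_at_z, if_neg (fun h => by omega), mul_zero, mul_zero]
          rw [Finset.sum_eq_zero hz0, zero_add]
        · rw [if_neg hw, add_zero, ih _ hw, mul_add, Finset.mul_sum]
      · simp only [if_neg hcc]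
        simp

include hω0 hω1 in
lemma omega_le_one : ∀ x u, ω x u ≤ 1 := by
  intro x u
  calc ω x u ≤ ∑ v, ω x v := Finset.single_le_sum (fun v _ => hω0 x v) (Finset.mem_univ u)
    _ = 1 := hω1 x

include hω0 hω1 hq0 hqs in
lemma summable_q (hd : 0 < d) {κ₀ δ : ℝ} (hκ : 0 < κ₀) (hω : ∀ x u, κ₀ ≤ ω x u)
    (hδ0 : 0 ≤ δ) (hδ1 : δ ≤ 1) (hUδ : U.Finite ∨ δ < 1) :
    ∀ x y'', Summable (fun n => δ ^ n * q x n y'') := by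
  have hqn := q_nonneg hω0 hq0 hqs
  have hq1 := q_le_one hω0 hω1 hq0 hqs
  have hterm : ∀ x y'' (n : ℕ), 0 ≤ δ ^ n * q x n y'' :=
    fun x y'' n => mul_nonneg (pow_nonneg hδ0 _) (hqn _ _ _)
  rcases hUδ with hU | hδ
  swap
  · intro x y''
    refine Summable.of_nonneg_of_le (hterm x y'') (fun n => ?_)
      (summable_geometric_of_lt_one hδ0 hδ)
    calc δ ^ n * q x n y'' ≤ δ ^ n * 1 :=
          mul_le_mul_of_nonneg_left (hq1 _ _ _) (pow_nonneg hδ0 _)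
      _ = δ ^ n := mul_one _
  · rcases Set.eq_empty_or_nonempty U with hUe | hUne
    · intro x y''
      refine summable_of_ne_finset_zero (s := {0}) fun n hn => ?_
      have hn' : n ≠ 0 := by simpa using hn
      obtain ⟨m, rfl⟩ := Nat.exists_eq_succ_of_ne_zero hn'
      rw [q_firstStep hq0 hqs, if_neg (by simp [hUe]), mul_zero]
    · -- build a supersolution
      set i : Fin d := ⟨0, hd⟩ with hi
      set S := hU.toFinset with hSdef
      have hS : S.Nonempty := by
        obtain ⟨w, hw⟩ := hUne
        rw [hSdef]
        exact ⟨w, hU.mem_toFinset.mpr hw⟩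
      clear_value i S
      set M : ℤ := S.sup' hS (fun w => w i) with hM
      set mm : ℤ := S.inf' hS (fun w => w i) with hmm
      have hmM : mm ≤ M := by
        have hS2 := hS
        obtain ⟨w0, hw0⟩ := hS2
        have h1 : w0 i ≤ S.sup' hS (fun w => w i) := Finset.le_sup' (fun w => w i) hw0
        have h2 : S.inf' hS (fun w => w i) ≤ w0 i := Finset.inf'_le (fun w => w i) hw0
        rw [hM, hmm]
        exact le_trans h2 h1
      clear_value M mm
      set T : ℕ := (M + 1 - mm).toNat with hT
      have hTz : (T : ℤ) = M + 1 - mm := Int.toNat_of_nonneg (by clear hM hmm; omega)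
      clear_value T
      obtain ⟨h, hhval⟩ : ∃ h : (Fin d → ℤ) → ℝ,
          ∀ w', h w' = ∑ t ∈ Finset.Ico ((M + 1 - w' i).toNat) (T + 1), Dfun κ₀ t :=
        ⟨_, fun _ => rfl⟩
      have hD0 := Dfun_nonneg hκ
      have h0 : ∀ w, 0 ≤ h w := fun w => by
        rw [hhval]
        exact Finset.sum_nonneg fun t _ => hD0 t
      have key : ∀ w ∈ U, (∑ u, ω w u * h (w + step d u)) + 1 ≤ h w := by
        intro w hw
        have hwS : w ∈ S := by
          rw [hSdef]
          exact hU.mem_toFinset.mpr hw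
        have hk1 : mm ≤ w i := by
          rw [hmm]
          exact Finset.inf'_le (fun w => w i) hwS
        have hk2 : w i ≤ M := by
          rw [hM]
          exact Finset.le_sup' (fun w => w i) hwS
        clear hM hmm
        set a : ℕ := (M - w i).toNat with ha
        have haz : (a : ℤ) = M - w i := Int.toNat_of_nonneg (by omega)
        clear_value a
        have hstep : ∀ b : Bool, (step d (i, b)) i = if b then 1 else -1 := by
          intro b
          simp [step, Pi.single_eq_same]
        have hsj : ∀ (j : Fin d) (b : Bool), j ≠ i → (w + step d (j, b)) i = w i := by
          intro j b hj
          simp [step, Pi.single_eq_of_ne hj.symm]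
        have hsiT : (w + step d (i, true)) i = w i + 1 := by
          show w i + step d (i, true) i = w i + 1
          rw [hstep true]
          norm_num
        have hsiF : (w + step d (i, false)) i = w i - 1 := by
          show w i + step d (i, false) i = w i - 1
          rw [hstep false]
          simp
          ring
        have idx0 : (M + 1 - (w i + 1)).toNat = a := by omega
        have idx1 : (M + 1 - w i).toNat = a + 1 := by omega
        have idx2 : (M + 1 - (w i - 1)).toNat = a + 2 := by omega
        have haT : a + 1 ≤ T := by omega
        have hplus : h (w + step d (i, true)) = Dfun κ₀ a + h w := by
          simp only [hhval]
          rw [hsiT, idx0, idx1]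
          exact Finset.sum_eq_sum_Ico_succ_bot (by omega) _
        have hminus : h (w + step d (i, false)) + Dfun κ₀ (a + 1) = h w := by
          simp only [hhval]
          rw [hsiF, idx2, idx1]
          rw [Finset.sum_eq_sum_Ico_succ_bot (show a + 1 < T + 1 by omega) (Dfun κ₀)]
          ring
        have hother : ∀ j b, j ≠ i → h (w + step d (j, b)) = h w := by
          intro j b hj
          simp only [hhval]
          rw [hsj j b hj]
        have hsplit : ∀ u : Fin d × Bool, ω w u * h (w + step d u) =
            ω w u * h w + ((if u = (i, true) then ω w u * Dfun κ₀ a else 0) -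
              (if u = (i, false) then ω w u * Dfun κ₀ (a + 1) else 0)) := by
          rintro ⟨j, b⟩
          by_cases hj : j = i
          · rw [hj]
            cases b
            · have hf : h (w + step d (i, false)) = h w - Dfun κ₀ (a + 1) := by
                linarith [hminus]
              rw [hf, if_neg (by simp), if_pos rfl]
              ring
            · rw [hplus, if_pos rfl, if_neg (by simp)]
              ring
          · rw [hother j b hj, if_neg (by simp [hj]), if_neg (by simp [hj])]
            ring
        have e0 : (∑ u, ω w u * h (w + step d u)) =
            (∑ u, ω w u * h w) + ((∑ u, if u = (i, true) then ω w u * Dfun κ₀ a else 0)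
              - (∑ u, if u = (i, false) then ω w u * Dfun κ₀ (a + 1) else 0)) := by
          rw [← Finset.sum_sub_distrib, ← Finset.sum_add_distrib]
          exact Finset.sum_congr rfl fun u _ => hsplit u
        have e1 : (∑ u, ω w u * h w) = h w := by
          rw [← Finset.sum_mul, hω1, one_mul]
        have e2 : (∑ u, if u = (i, true) then ω w u * Dfun κ₀ a else 0)
            = ω w (i, true) * Dfun κ₀ a := by
          rw [Finset.sum_ite_eq' Finset.univ ((i, true)) (fun u => ω w u * Dfun κ₀ a)]
          simp
        have e3 : (∑ u, if u = (i, false) then ω w u * Dfun κ₀ (a + 1) else 0)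
            = ω w (i, false) * Dfun κ₀ (a + 1) := by
          rw [Finset.sum_ite_eq' Finset.univ ((i, false)) (fun u => ω w u * Dfun κ₀ (a + 1))]
          simp
        have f1 : ω w (i, true) * Dfun κ₀ a ≤ Dfun κ₀ a :=
          mul_le_of_le_one_left (hD0 a) (omega_le_one hω0 hω1 w (i, true))
        have f2 : κ₀ * Dfun κ₀ (a + 1) ≤ ω w (i, false) * Dfun κ₀ (a + 1) :=
          mul_le_mul_of_nonneg_right (hω _ _) (hD0 _)
        have hDs := Dfun_succ hκ a
        rw [e0, e1, e2, e3]
        linarith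
      intro x y''
      have bound : ∀ N x', ∑ n ∈ Finset.range N, q x' n y'' ≤ h x' + 1 := by
        intro N
        induction N with
        | zero =>
          intro x'
          rw [Finset.range_zero, Finset.sum_empty]
          linarith [h0 x']
        | succ N ih =>
          intro x'
          rw [Finset.sum_range_succ']
          simp only [q_firstStep hq0 hqs]
          by_cases hxu : x' ∈ U
          · simp only [if_pos hxu]
            have e0 : q x' 0 y'' ≤ 1 := hq1 0 x' y''
            have e1 : ∑ n ∈ Finset.range N, ∑ u, ω x' u * q (x' + step d u) n y''
                = ∑ u, ω x' u * ∑ n ∈ Finset.range N, q (x' + step d u) n y'' := by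
              rw [Finset.sum_comm]
              exact Finset.sum_congr rfl fun u _ => (Finset.mul_sum _ _ _).symm
            rw [e1]
            have e2 : ∑ u, ω x' u * ∑ n ∈ Finset.range N, q (x' + step d u) n y''
                ≤ ∑ u, ω x' u * (h (x' + step d u) + 1) :=
              Finset.sum_le_sum fun u _ => mul_le_mul_of_nonneg_left (ih _) (hω0 _ _)
            have e3 : ∑ u, ω x' u * (h (x' + step d u) + 1)
                = (∑ u, ω x' u * h (x' + step d u)) + 1 := by
              simp only [mul_add, mul_one]
              rw [Finset.sum_add_distrib, hω1]
            have e4 := key x' hxu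
            linarith
          · simp only [if_neg hxu]
            have := hq1 0 x' y''
            simp only [Finset.sum_const_zero]
            linarith [h0 x']
      refine summable_of_sum_range_le (c := h x + 1) (hterm x y'') fun N => ?_
      calc ∑ n ∈ Finset.range N, δ ^ n * q x n y''
          ≤ ∑ n ∈ Finset.range N, q x n y'' := by
            refine Finset.sum_le_sum fun n _ => ?_
            calc δ ^ n * q x n y'' ≤ 1 * q x n y'' :=
                  mul_le_mul_of_nonneg_right (pow_le_one₀ hδ0 hδ1) (hqn _ _ _)
              _ = q x n y'' := one_mul _
        _ ≤ h x + 1 := bound N x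
end Basic

end Stmt18Aux


open Stmt18Aux in
/-- Off-diagonal ratio bound: for a uniformly elliptic environment `ω ∈ Ω_{κ₀}`,
`z ∈ U`, `y' ∈ U ∪ ∂U` with `y' ≠ z`, and any unit step `e`,
`|δ G_{U,δ}(z+e, y') - G_{U,δ}(z, y')| ≤ (1/κ₀²) G_{U,δ}(z,y') / G_{U,δ}(z,z)`. -/
theorem stmt18 (d : ℕ) (hd : 0 < d) (κ₀ : ℝ) (hκ : 0 < κ₀)
    (ω : (Fin d → ℤ) → Fin d × Bool → ℝ)
    (hω : ∀ x u, κ₀ ≤ ω x u) (hω1 : ∀ x, ∑ u, ω x u = 1)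
    (U : Set (Fin d → ℤ)) [DecidablePred (· ∈ U)]
    (δ : ℝ) (hδ0 : 0 < δ) (hδ1 : δ ≤ 1) (hUδ : U.Finite ∨ δ < 1)
    (q : (Fin d → ℤ) → ℕ → (Fin d → ℤ) → ℝ)
    (hq0 : ∀ x z', q x 0 z' = if z' = x then 1 else 0)
    (hqs : ∀ x n z', q x (n + 1) z' =
      ∑ u, if z' - step d u ∈ U then ω (z' - step d u) u * q x n (z' - step d u) else 0)
    (G : (Fin d → ℤ) → (Fin d → ℤ) → ℝ)
    (hG : ∀ x z', G x z' = ∑' n : ℕ, δ ^ n * q x n z')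
    (z : Fin d → ℤ) (hz : z ∈ U)
    (y' : Fin d → ℤ)
    (hy' : y' ∈ U ∪ {x : Fin d → ℤ | x ∉ U ∧ ∃ u, x + step d u ∈ U})
    (hne : y' ≠ z) (e : Fin d × Bool) :
    |δ * G (z + step d e) y' - G z y'| ≤ (1 / κ₀ ^ 2) * (G z y' / G z z) := by
  have hω0 : ∀ x u, (0:ℝ) ≤ ω x u := fun x u => le_trans hκ.le (hω x u)
  have hωle1 := omega_le_one hω0 hω1
  have hκ1 : κ₀ ≤ 1 := le_trans (hω z e) (hωle1 z e)
  have hqn := q_nonneg hω0 hq0 hqs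
  have hqan := qa_nonneg (ω := ω) (U := U) (z := z) hω0
  have hqhn := qh_nonneg (ω := ω) (U := U) (z := z) hω0
  have hterm : ∀ x y'' (n : ℕ), 0 ≤ δ ^ n * q x n y'' :=
    fun x y'' n => mul_nonneg (pow_nonneg hδ0.le _) (hqn _ _ _)
  have Sq : ∀ x y'', Summable (fun n => δ ^ n * q x n y'') :=
    summable_q hω0 hω1 hq0 hqs hd hκ hω hδ0.le hδ1 hUδ
  have SqN : ∀ x y'', Summable (fun n => ‖δ ^ n * q x n y''‖) := fun x y'' =>
    (Sq x y'').congr fun n => (Real.norm_of_nonneg (hterm x y'' n)).symm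
  have hterma : ∀ x y'' (n : ℕ), 0 ≤ δ ^ n * qa ω U z x n y'' :=
    fun x y'' n => mul_nonneg (pow_nonneg hδ0.le _) (hqan _ _ _)
  have Sqa : ∀ x y'', Summable (fun n => δ ^ n * qa ω U z x n y'') := fun x y'' =>
    Summable.of_nonneg_of_le (hterma x y'')
      (fun n => mul_le_mul_of_nonneg_left (qa_le_q hω0 hq0 hqs _ _ _) (pow_nonneg hδ0.le _))
      (Sq x y'')
  have SqaN : ∀ x y'', Summable (fun n => ‖δ ^ n * qa ω U z x n y''‖) := fun x y'' =>
    (Sqa x y'').congr fun n => (Real.norm_of_nonneg (hterma x y'' n)).symm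
  have htermh : ∀ x (n : ℕ), 0 ≤ δ ^ n * qh ω U z n x :=
    fun x n => mul_nonneg (pow_nonneg hδ0.le _) (hqhn _ _)
  have Sqh : ∀ x, Summable (fun n => δ ^ n * qh ω U z n x) := fun x => by
    refine summable_of_sum_range_le (c := 1) (htermh x) fun N => ?_
    calc ∑ n ∈ Finset.range N, δ ^ n * qh ω U z n x
        ≤ ∑ n ∈ Finset.range N, qh ω U z n x := by
          refine Finset.sum_le_sum fun n _ => ?_
          calc δ ^ n * qh ω U z n x ≤ 1 * qh ω U z n x :=
                mul_le_mul_of_nonneg_right (pow_le_one₀ hδ0.le hδ1) (hqhn _ _)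
            _ = qh ω U z n x := one_mul _
      _ ≤ 1 := qh_psum_le_one hω0 hω1 N x
  have SqhN : ∀ x, Summable (fun n => ‖δ ^ n * qh ω U z n x‖) := fun x =>
    (Sqh x).congr fun n => (Real.norm_of_nonneg (htermh x n)).symm
  have Gnn : ∀ x y'', 0 ≤ G x y'' := fun x y'' => by
    rw [hG]
    exact tsum_nonneg (hterm x y'')
  set Ga : (Fin d → ℤ) → ℝ := fun x => ∑' n, δ ^ n * qa ω U z x n y' with hGa
  set Hh : (Fin d → ℤ) → ℝ := fun x => ∑' n, δ ^ n * qh ω U z n x with hHh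
  have Gann : ∀ x, 0 ≤ Ga x := fun x => tsum_nonneg (hterma x y')
  have Hnn : ∀ x, 0 ≤ Hh x := fun x => tsum_nonneg (htermh x)
  have Hle1 : ∀ x, Hh x ≤ 1 := fun x => by
    refine (Sqh x).tsum_le_of_sum_range_le fun N => ?_
    calc ∑ n ∈ Finset.range N, δ ^ n * qh ω U z n x
        ≤ ∑ n ∈ Finset.range N, qh ω U z n x := by
          refine Finset.sum_le_sum fun n _ => ?_
          calc δ ^ n * qh ω U z n x ≤ 1 * qh ω U z n x :=
                mul_le_mul_of_nonneg_right (pow_le_one₀ hδ0.le hδ1) (hqhn _ _)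
            _ = qh ω U z n x := one_mul _
      _ ≤ 1 := qh_psum_le_one hω0 hω1 N x
  have hGzz1 : (1:ℝ) ≤ G z z := by
    rw [hG]
    have h0 : δ ^ 0 * q z 0 z = 1 := by rw [pow_zero, one_mul, hq0, if_pos rfl]
    calc (1:ℝ) = δ ^ 0 * q z 0 z := h0.symm
      _ ≤ ∑' n, δ ^ n * q z n z := (Sq z z).le_tsum 0 (fun m _ => hterm z z m)
  have hGzz0 : (0:ℝ) < G z z := lt_of_lt_of_le one_pos hGzz1
  -- decomposition A
  have decompA : ∀ x, G x y' = (if x = z then 0 else Ga x) + G x z * Ga z := by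
    intro x
    have e1 : ∀ n : ℕ, δ ^ n * q x n y' = (if x = z then 0 else δ ^ n * qa ω U z x n y') +
        ∑ m ∈ Finset.range (n + 1), (δ ^ m * q x m z) * (δ ^ (n - m) * qa ω U z z (n - m) y') := by
      intro n
      rw [lastExit hω0 hq0 hqs x n y' hne, mul_add]
      congr 1
      · split
        · rw [mul_zero]
        · rfl
      · rw [Finset.sum_range_succ]
        have hz0 : (δ ^ n * q x n z) * (δ ^ (n - n) * qa ω U z z (n - n) y') = 0 := by
          rw [Nat.sub_self, qa_zero, if_neg hne, mul_zero, mul_zero]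
        rw [hz0, add_zero, Finset.mul_sum]
        refine Finset.sum_congr rfl fun m hm => ?_
        have hmn : m < n := Finset.mem_range.mp hm
        have hpow : δ ^ m * δ ^ (n - m) = δ ^ n := by
          rw [← pow_add]
          congr 1
          omega
        calc δ ^ n * (q x m z * qa ω U z z (n - m) y')
            = (δ ^ m * δ ^ (n - m)) * (q x m z * qa ω U z z (n - m) y') := by rw [hpow]
          _ = (δ ^ m * q x m z) * (δ ^ (n - m) * qa ω U z z (n - m) y') := by ring
    have S1 : Summable (fun n : ℕ => if x = z then 0 else δ ^ n * qa ω U z x n y') := by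
      by_cases hxz : x = z
      · simp only [if_pos hxz]
        exact summable_zero
      · simp only [if_neg hxz]
        exact Sqa x y'
    have S2 : Summable (fun n : ℕ => ∑ m ∈ Finset.range (n + 1),
        (δ ^ m * q x m z) * (δ ^ (n - m) * qa ω U z z (n - m) y')) :=
      (summable_norm_sum_mul_range_of_summable_norm (SqN x z) (SqaN z y')).of_norm
    calc G x y' = ∑' n, δ ^ n * q x n y' := hG x y'
      _ = ∑' n, ((if x = z then 0 else δ ^ n * qa ω U z x n y') +
          ∑ m ∈ Finset.range (n + 1),
            (δ ^ m * q x m z) * (δ ^ (n - m) * qa ω U z z (n - m) y')) := tsum_congr e1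
      _ = (∑' n, (if x = z then 0 else δ ^ n * qa ω U z x n y')) +
          ∑' n, ∑ m ∈ Finset.range (n + 1),
            (δ ^ m * q x m z) * (δ ^ (n - m) * qa ω U z z (n - m) y') := S1.tsum_add S2
      _ = (if x = z then 0 else Ga x) + G x z * Ga z := by
          congr 1
          · by_cases hxz : x = z
            · simp only [if_pos hxz]
              exact tsum_zero
            · simp only [if_neg hxz]; rfl
          · rw [← tsum_mul_tsum_eq_tsum_sum_range_of_summable_norm (SqN x z) (SqaN z y'), hG]
  -- decomposition B
  have decompB : ∀ x, G x z = Hh x * G z z := by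
    intro x
    have e1 : ∀ n : ℕ, δ ^ n * q x n z = ∑ m ∈ Finset.range (n + 1),
        (δ ^ m * qh ω U z m x) * (δ ^ (n - m) * q z (n - m) z) := by
      intro n
      rw [firstVisit hq0 hqs n x, Finset.mul_sum]
      refine Finset.sum_congr rfl fun m hm => ?_
      have hmn : m < n + 1 := Finset.mem_range.mp hm
      have hpow : δ ^ m * δ ^ (n - m) = δ ^ n := by
        rw [← pow_add]
        congr 1
        omega
      calc δ ^ n * (qh ω U z m x * q z (n - m) z)
          = (δ ^ m * δ ^ (n - m)) * (qh ω U z m x * q z (n - m) z) := by rw [hpow]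
        _ = (δ ^ m * qh ω U z m x) * (δ ^ (n - m) * q z (n - m) z) := by ring
    calc G x z = ∑' n, δ ^ n * q x n z := hG x z
      _ = ∑' n, ∑ m ∈ Finset.range (n + 1),
          (δ ^ m * qh ω U z m x) * (δ ^ (n - m) * q z (n - m) z) := tsum_congr e1
      _ = Hh x * G z z := by
          rw [← tsum_mul_tsum_eq_tsum_sum_range_of_summable_norm (SqhN x) (SqN z z), hG]
  -- harmonicity of G
  have harmG : G z y' = δ * ∑ u, ω z u * G (z + step d u) y' := by
    rw [hG, (Sq z y').tsum_eq_zero_add]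
    have h00 : δ ^ 0 * q z 0 y' = 0 := by
      rw [pow_zero, one_mul, hq0, if_neg hne]
    rw [h00, zero_add]
    have e1 : ∀ n : ℕ, δ ^ (n + 1) * q z (n + 1) y' =
        ∑ u, ω z u * (δ * (δ ^ n * q (z + step d u) n y')) := by
      intro n
      rw [q_firstStep hq0 hqs, if_pos hz, Finset.mul_sum]
      refine Finset.sum_congr rfl fun u _ => ?_
      ring
    rw [tsum_congr e1,
      Summable.tsum_finsetSum (fun u _ => (((Sq (z + step d u) y').mul_left δ).mul_left (ω z u))),
      Finset.mul_sum]
    refine Finset.sum_congr rfl fun u _ => ?_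
    rw [tsum_mul_left, tsum_mul_left, hG]
    ring
  -- harmonicity of Ga
  have harmGa : Ga z = δ * ∑ u, ω z u * Ga (z + step d u) := by
    show (∑' n, δ ^ n * qa ω U z z n y') =
      δ * ∑ u, ω z u * ∑' n, δ ^ n * qa ω U z (z + step d u) n y'
    rw [(Sqa z y').tsum_eq_zero_add]
    have h00 : δ ^ 0 * qa ω U z z 0 y' = 0 := by
      rw [pow_zero, one_mul, qa_zero, if_neg hne]
    rw [h00, zero_add]
    have e1 : ∀ n : ℕ, δ ^ (n + 1) * qa ω U z z (n + 1) y' =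
        ∑ u, ω z u * (δ * (δ ^ n * qa ω U z (z + step d u) n y')) := by
      intro n
      rw [qa_firstStep hz, Finset.mul_sum]
      refine Finset.sum_congr rfl fun u _ => ?_
      ring
    rw [tsum_congr e1,
      Summable.tsum_finsetSum (fun u _ => (((Sqa (z + step d u) y').mul_left δ).mul_left (ω z u))),
      Finset.mul_sum]
    refine Finset.sum_congr rfl fun u _ => ?_
    rw [tsum_mul_left, tsum_mul_left]
    ring
  have GaEq : G z y' = G z z * Ga z := by
    have h := decompA z
    rwa [if_pos rfl, zero_add] at h
  have GaDiv : Ga z = G z y' / G z z := by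
    rw [eq_div_iff (ne_of_gt hGzz0), GaEq]
    ring
  -- one-direction bound
  have oneDir : ∀ u, δ * G (z + step d u) y' - G z y' ≤ (1 / κ₀) * (G z y' / G z z) := by
    intro u
    have hne' : z + step d u ≠ z := add_step_ne z u
    have k1 : κ₀ * (δ * Ga (z + step d u)) ≤ Ga z := by
      calc κ₀ * (δ * Ga (z + step d u)) = δ * (κ₀ * Ga (z + step d u)) := by ring
        _ ≤ δ * (ω z u * Ga (z + step d u)) :=
            mul_le_mul_of_nonneg_left
              (mul_le_mul_of_nonneg_right (hω z u) (Gann _)) hδ0.le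
        _ ≤ δ * ∑ v, ω z v * Ga (z + step d v) :=
            mul_le_mul_of_nonneg_left
              (Finset.single_le_sum (f := fun v => ω z v * Ga (z + step d v))
                (fun v _ => mul_nonneg (hω0 z v) (Gann (z + step d v)))
                (Finset.mem_univ u)) hδ0.le
        _ = Ga z := harmGa.symm
    have hB : δ * G (z + step d u) z ≤ G z z := by
      rw [decompB (z + step d u)]
      have t1 : Hh (z + step d u) * G z z ≤ G z z :=
        mul_le_of_le_one_left (Gnn z z) (Hle1 _)
      have t2 : δ * (Hh (z + step d u) * G z z) ≤ Hh (z + step d u) * G z z :=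
        mul_le_of_le_one_left (mul_nonneg (Hnn _) (Gnn z z)) hδ1
      linarith
    have hDecomp : δ * G (z + step d u) y' =
        δ * Ga (z + step d u) + (δ * G (z + step d u) z) * Ga z := by
      rw [decompA (z + step d u), if_neg hne']
      ring
    have k2 : κ₀ * ((δ * G (z + step d u) z) * Ga z) ≤ κ₀ * (G z z * Ga z) := by
      apply mul_le_mul_of_nonneg_left _ hκ.le
      exact mul_le_mul_of_nonneg_right hB (Gann z)
    have main : κ₀ * (δ * G (z + step d u) y' - G z y') ≤ Ga z := by
      have hgg : G z z * Ga z = G z y' := GaEq.symm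
      nlinarith [k1, k2, hDecomp]
    have hfin : δ * G (z + step d u) y' - G z y' ≤ Ga z / κ₀ := by
      rw [le_div_iff₀ hκ]
      nlinarith [main]
    have heq : (1 / κ₀) * (G z y' / G z z) = Ga z / κ₀ := by
      rw [← GaDiv]
      ring
    linarith
  -- harmonicity sum identity
  have harm0 : ∑ u, ω z u * (δ * G (z + step d u) y' - G z y') = 0 := by
    simp only [mul_sub]
    rw [Finset.sum_sub_distrib, ← Finset.sum_mul, hω1, one_mul]
    have e2 : ∑ u, ω z u * (δ * G (z + step d u) y') =
        δ * ∑ u, ω z u * G (z + step d u) y' := by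
      rw [Finset.mul_sum]
      exact Finset.sum_congr rfl fun u _ => by ring
    rw [e2, ← harmG, sub_self]
  -- final assembly
  have hXnn : 0 ≤ G z y' / G z z := div_nonneg (Gnn z y') (Gnn z z)
  have hBnn : 0 ≤ (1 / κ₀) * (G z y' / G z z) :=
    mul_nonneg (by positivity) hXnn
  have hXBnn : 0 ≤ (1 / κ₀ ^ 2) * (G z y' / G z z) :=
    mul_nonneg (by positivity) hXnn
  have hXB : κ₀ * ((1 / κ₀ ^ 2) * (G z y' / G z z)) = (1 / κ₀) * (G z y' / G z z) := by
    field_simp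
  rw [abs_le]
  constructor
  · have hsum : ω z e * (δ * G (z + step d e) y' - G z y') =
        - ∑ u ∈ Finset.univ.erase e, ω z u * (δ * G (z + step d u) y' - G z y') := by
      have h := harm0
      rw [← Finset.add_sum_erase _ _ (Finset.mem_univ e)] at h
      linarith
    have hErase : ∑ u ∈ Finset.univ.erase e, ω z u ≤ 1 := by
      calc ∑ u ∈ Finset.univ.erase e, ω z u ≤ ∑ u, ω z u :=
            Finset.sum_le_sum_of_subset_of_nonneg (Finset.erase_subset _ _)
              (fun u _ _ => hω0 z u)
        _ = 1 := hω1 z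
    have hub : ∑ u ∈ Finset.univ.erase e, ω z u * (δ * G (z + step d u) y' - G z y')
        ≤ (1 / κ₀) * (G z y' / G z z) := by
      calc ∑ u ∈ Finset.univ.erase e, ω z u * (δ * G (z + step d u) y' - G z y')
          ≤ ∑ u ∈ Finset.univ.erase e, ω z u * ((1 / κ₀) * (G z y' / G z z)) :=
            Finset.sum_le_sum fun u _ => mul_le_mul_of_nonneg_left (oneDir u) (hω0 z u)
        _ = (∑ u ∈ Finset.univ.erase e, ω z u) * ((1 / κ₀) * (G z y' / G z z)) :=
            (Finset.sum_mul _ _ _).symm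
        _ ≤ 1 * ((1 / κ₀) * (G z y' / G z z)) :=
            mul_le_mul_of_nonneg_right hErase hBnn
        _ = (1 / κ₀) * (G z y' / G z z) := one_mul _
    have h1 : -((1 / κ₀) * (G z y' / G z z)) ≤
        ω z e * (δ * G (z + step d e) y' - G z y') := by
      rw [hsum]
      linarith
    rcases le_or_gt 0 (δ * G (z + step d e) y' - G z y') with h | h
    · linarith
    · have h2 : ω z e * (δ * G (z + step d e) y' - G z y') ≤
          κ₀ * (δ * G (z + step d e) y' - G z y') :=
        mul_le_mul_of_nonpos_right (hω z e) h.le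
      nlinarith [h1, h2, hXB, hκ]
  · have h3 := oneDir e
    nlinarith [hXB, hκ1, hXBnn, h3, hκ]
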